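/- Let F be a field with |F| > 2, V a finite-dimensional vector space over F of dimension n ≥ 3, and S a linear subspace of End(V) with: (a) every element of S has at most 2 distinct eigenvalues in F; (b) φ⊗V ⊆ S for some nonzero linear form φ on V (i.e., φ⊗y ∈ S for all y ∈ V). Then for every x ∈ V such that some nonzero ψ ∈ V* satisfies ψ(x)=0 and ψ⊗x ∈ S, one has φ(x) = 0. -/

import Mathlib

/-- First Confinement Lemma: let V be n-dimensional with n ≥ 3 over a field with more
than 2 elements, and S ⊆ End(V) a subspace all of whose elements have at most 2
distinct eigenvalues in F. If φ ⊗ V ⊆ S for some nonzero linear form φ, then every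
non-S-adapted vector x (one admitting a nonzero ψ with ψ(x) = 0 and ψ ⊗ x ∈ S) lies in
the hyperplane ker φ. -/
theorem stmt13 {F V : Type*} [Field F] [AddCommGroup V] [Module F V]
    [FiniteDimensional F V] {n : ℕ} (hn : 3 ≤ n) (hV : Module.finrank F V = n)
    (hF : 2 < Cardinal.mk F)
    (S : Submodule F (V →ₗ[F] V))
    (hspec : ∀ u ∈ S, ∃ a b : F, ∀ c : F, Module.End.HasEigenvalue u c → c = a ∨ c = b)
    (φ : V →ₗ[F] F) (hφ : φ ≠ 0)
    (hall : ∀ y : V, φ.smulRight y ∈ S) :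
    ∀ x : V, (∃ ψ : V →ₗ[F] F, ψ ≠ 0 ∧ ψ x = 0 ∧ ψ.smulRight x ∈ S) → φ x = 0 := by
  rintro x ⟨ψ, hψ, hψx, hψS⟩
  by_contra hxa
  set a : F := φ x with ha
  -- find μ ≠ 0, 1
  obtain ⟨μ, hμ0, hμ1⟩ : ∃ μ : F, μ ≠ 0 ∧ μ ≠ 1 := by
    have h3 : (3 : Cardinal) ≤ Cardinal.mk F := by
      have h := Order.succ_le_of_lt hF
      have e : ((2 : ℕ) : Cardinal) = (2 : Cardinal) := by norm_num
      rw [← e, ← Cardinal.nat_succ] at h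
      exact_mod_cast h
    obtain ⟨z, hz0, hz1⟩ := Cardinal.three_le h3 (0 : F) 1
    exact ⟨z, hz0, hz1⟩
  -- find y₀ with φ y₀ = 0, ψ y₀ ≠ 0
  obtain ⟨y₀, hy₀φ, hy₀ψ⟩ : ∃ y₀ : V, φ y₀ = 0 ∧ ψ y₀ ≠ 0 := by
    by_contra h
    push_neg at h
    apply hψ
    ext z
    have hz : φ (z - (φ z / a) • x) = 0 := by
      simp [ha, div_mul_cancel₀]
      field_simp
      simp [div_self (show φ x ≠ 0 from hxa)]
    have := h _ hz
    simpa [hψx, sub_eq_zero] using this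
  set c₀ : F := ψ y₀ with hc₀
  -- define y
  set b : F := 1 + μ with hb
  set c : F := -μ / a with hc
  set y : V := (b / a) • x + (c / c₀) • y₀ with hy
  have hφy : φ y = b := by
    simp [hy, hy₀φ, ← ha]
    field_simp
  have hψy : ψ y = c := by
    simp [hy, hψx, hc₀]
    exact div_mul_cancel₀ c (show ψ y₀ ≠ 0 from hy₀ψ)
  have hca : c * a = -μ := by
    rw [hc]; field_simp
  -- the operator
  set u : V →ₗ[F] V := φ.smulRight y + ψ.smulRight x with hu
  have huS : u ∈ S := S.add_mem (hall y) hψS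
  have happ : ∀ z : V, u z = φ z • y + ψ z • x := by
    intro z; simp [hu]
  -- eigenvalue 0
  have hker : ∃ z : V, z ≠ 0 ∧ φ z = 0 ∧ ψ z = 0 := by
    by_contra h
    push_neg at h
    have hinj : Function.Injective (φ.prod ψ) := by
      rw [← LinearMap.ker_eq_bot]
      rw [Submodule.eq_bot_iff]
      intro z hz
      rw [LinearMap.mem_ker, LinearMap.prod_apply] at hz
      by_contra hz0
      have h1 : φ z = 0 := congrArg Prod.fst hz
      have h2 : ψ z = 0 := congrArg Prod.snd hz
      exact h z hz0 h1 h2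
    have := LinearMap.finrank_le_finrank_of_injective hinj
    have h2 : Module.finrank F (F × F) = 2 := by simp
    omega
  obtain ⟨z, hz0, hzφ, hzψ⟩ := hker
  have hev0 : Module.End.HasEigenvalue u (0 : F) := by
    apply Module.End.hasEigenvalue_of_hasEigenvector (x := z)
    refine ⟨Module.End.mem_eigenspace_iff.2 ?_, hz0⟩
    rw [happ, hzφ, hzψ]; simp
  -- eigenvalue 1 with eigenvector c • x + y
  have hev1 : Module.End.HasEigenvalue u (1 : F) := by
    apply Module.End.hasEigenvalue_of_hasEigenvector (x := c • x + y)
    constructor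
    · apply Module.End.mem_eigenspace_iff.2
      rw [happ]
      simp only [map_add, map_smul, hφy, hψy, hψx, ← ha, smul_eq_mul, one_smul]
      have h1 : c * a + b = 1 := by rw [hca, hb]; ring
      have : (c * a + b) • y + (c * 0 + c) • x = c • x + y := by
        rw [h1]; simp [add_comm]
      simpa using this
    · intro hcon
      have h1 : φ (c • x + y) = 1 := by
        rw [map_add, map_smul, hφy, ← ha, smul_eq_mul, hca, hb]; ring
      rw [hcon, map_zero] at h1
      exact one_ne_zero h1.symm
  -- eigenvalue μ with eigenvector c • x + μ • y
  have hevμ : Module.End.HasEigenvalue u μ := by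
    apply Module.End.hasEigenvalue_of_hasEigenvector (x := c • x + μ • y)
    constructor
    · apply Module.End.mem_eigenspace_iff.2
      rw [happ]
      simp only [map_add, map_smul, hφy, hψy, hψx, ← ha, smul_eq_mul, smul_add, smul_smul]
      have h1 : c * a + μ * b = μ * μ := by rw [hca, hb]; ring
      have h2 : c * 0 + μ * c = μ * c := by ring
      rw [h1, h2]
      module
    · intro hcon
      have h1 : φ (c • x + μ • y) = μ * μ := by
        rw [map_add, map_smul, map_smul, hφy, ← ha, smul_eq_mul, smul_eq_mul, hca, hb]; ring
      rw [hcon, map_zero] at h1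
      exact hμ0 (mul_self_eq_zero.mp h1.symm)
  obtain ⟨p, q, hpq⟩ := hspec u huS
  rcases hpq 0 hev0 with h0 | h0 <;> rcases hpq 1 hev1 with h1 | h1 <;>
    rcases hpq μ hevμ with h2 | h2 <;>
    first
      | exact one_ne_zero (h1.trans h0.symm)
      | exact hμ0 (h2.trans h0.symm)
      | exact hμ1 (h2.trans h1.symm)
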